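/- arXiv:1807.09598 — 4 statements merged into one kernel-verified Lean document; each statement's English description precedes it below -/
import Mathlib

section
/- If θ > π/6, then the Steiner (Fermat) configuration with a triple junction strictly beats the cone V_θ: there exists a point C = (0, y) with y > 0 such that |AC| + |CB| + y < 2, where A = (−cosθ, sinθ) and B = (cosθ, sinθ). Hence V_θ is not length-minimizing when θ > π/6. -/
open Real Set

theorem stmt_3 (θ : ℝ) (hθ1 : π/6 < θ) (hθ2 : θ ≤ π/2) :
    ∃ y : ℝ, 0 < y ∧
      2 * Real.sqrt ((Real.cos θ)^2 + (Real.sin θ - y)^2) + y < 2 := by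
  have hπ : (0:ℝ) < π := Real.pi_pos
  have hθ0 : 0 < θ := lt_trans (by positivity) hθ1
  have hcosnn : 0 ≤ Real.cos θ := Real.cos_nonneg_of_mem_Icc ⟨by linarith, hθ2⟩
  have hs3 : Real.sqrt 3 > 0 := by positivity
  have hs3sq : Real.sqrt 3 ^ 2 = 3 := Real.sq_sqrt (by norm_num)
  -- sin θ > 1/2
  have hsin : Real.sin (π/6) < Real.sin θ := by
    apply Real.sin_lt_sin_of_lt_of_le_pi_div_two (by linarith) hθ2 hθ1
  rw [Real.sin_pi_div_six] at hsin
  -- cos θ < √3/2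
  have hcos : Real.cos θ < Real.cos (π/6) := by
    apply Real.cos_lt_cos_of_nonneg_of_le_pi (by positivity) (by linarith) hθ1
  rw [Real.cos_pi_div_six] at hcos
  refine ⟨Real.sin θ - Real.cos θ / Real.sqrt 3, ?_, ?_⟩
  · have : Real.cos θ / Real.sqrt 3 < 1/2 := by
      rw [div_lt_iff₀ hs3]
      nlinarith [hs3sq, hs3]
    linarith
  · have hval : (Real.cos θ)^2 + (Real.sin θ - (Real.sin θ - Real.cos θ / Real.sqrt 3))^2
        = (2 * Real.cos θ / Real.sqrt 3)^2 := by
      field_simp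
      ring_nf
      linear_combination (Real.cos θ)^2 * hs3sq
    rw [hval, Real.sqrt_sq (by positivity)]
    -- √3 cos θ + sin θ < 2, i.e. cos(θ - π/6) < 1
    have hkey : Real.cos (θ - π/6) < Real.cos 0 := by
      apply Real.cos_lt_cos_of_nonneg_of_le_pi le_rfl (by linarith) (by linarith)
    rw [Real.cos_zero, Real.cos_sub, Real.cos_pi_div_six, Real.sin_pi_div_six] at hkey
    have h2 : 2 * (2 * Real.cos θ / Real.sqrt 3) = Real.sqrt 3 * Real.cos θ + Real.cos θ / Real.sqrt 3 := by
      field_simp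
      nlinarith [hs3sq]
    nlinarith [hs3sq, hs3]
end

section
/- If 0 ≤ θ < θ_α := arccos α, then the cone V_θ is not minimal for the weighted functional: there exists x₀ ∈ (0, cosθ) such that |A C'| + |C'' B| + α·|C' C''| < 2, where A = (−cosθ, sinθ), B = (cosθ, sinθ), C' = (−x₀, 0), C'' = (x₀, 0), and |C'C''| = 2x₀. -/
open Real Set

theorem stmt_4 (α θ : ℝ) (hα : α ∈ Ioc (0:ℝ) 1) (hθ0 : 0 ≤ θ)
    (hθ : θ < Real.arccos α) :
    ∃ x₀ ∈ Ioo 0 (Real.cos θ),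
      2 * Real.sqrt ((Real.cos θ - x₀)^2 + (Real.sin θ)^2) + α * (2 * x₀) < 2 := by
  obtain ⟨hα0, hα1⟩ := hα
  have hc : α < Real.cos θ := by
    have h1 : Real.cos (Real.arccos α) < Real.cos θ := by
      apply Real.cos_lt_cos_of_nonneg_of_le_pi hθ0 (Real.arccos_le_pi α) hθ
    rwa [Real.cos_arccos (by linarith) hα1] at h1
  set c := Real.cos θ with hcdef
  have hc0 : 0 < c := lt_trans hα0 hc
  have hc1 : c ≤ 1 := Real.cos_le_one θ
  set x₀ := min ((c - α) / 2) (c / 2) with hx0def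
  have hx0pos : 0 < x₀ := lt_min (by linarith) (by linarith)
  have hx0lt : x₀ < c := lt_of_le_of_lt (min_le_right _ _) (by linarith)
  have hx0le : x₀ ≤ (c - α) / 2 := min_le_left _ _
  refine ⟨x₀, ⟨hx0pos, hx0lt⟩, ?_⟩
  have hs : Real.sin θ ^ 2 = 1 - c ^ 2 := by
    rw [Real.sin_sq]
  have hpos : 0 < 1 - α * x₀ := by nlinarith
  have key : Real.sqrt ((c - x₀)^2 + (Real.sin θ)^2) < 1 - α * x₀ := by
    rw [show ((c - x₀)^2 + (Real.sin θ)^2) = (c - x₀)^2 + (1 - c^2) by rw [hs]]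
    rw [Real.sqrt_lt' hpos]
    nlinarith [sq_nonneg α, sq_nonneg x₀, mul_pos hα0 hx0pos]
  linarith
end

section
/- For all x > 0 and c > 0, √((3/2)x² + √2·c·x + c²) ≤ √(3/2)·x + c/√3 + √(2/3)·c²/x. -/
open Real

theorem stmt_9 (x c : ℝ) (hx : 0 < x) (hc : 0 < c) :
    Real.sqrt ((3/2)*x^2 + Real.sqrt 2 * c * x + c^2)
      ≤ Real.sqrt (3/2) * x + c / Real.sqrt 3 + Real.sqrt (2/3) * c^2 / x := by
  have e1 : Real.sqrt (3/2) = Real.sqrt 3 / Real.sqrt 2 := Real.sqrt_div (by norm_num) 2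
  have e2 : Real.sqrt (2/3) = Real.sqrt 2 / Real.sqrt 3 := Real.sqrt_div (by norm_num) 3
  have h2 : Real.sqrt 2 ^ 2 = 2 := Real.sq_sqrt (by norm_num)
  have h3 : Real.sqrt 3 ^ 2 = 3 := Real.sq_sqrt (by norm_num)
  have p2 : (0:ℝ) < Real.sqrt 2 := Real.sqrt_pos.mpr (by norm_num)
  have p3 : (0:ℝ) < Real.sqrt 3 := Real.sqrt_pos.mpr (by norm_num)
  rw [e1, e2]
  set s2 := Real.sqrt 2
  set s3 := Real.sqrt 3
  have hR : s3 / s2 * x + c / s3 + s2 / s3 * c ^ 2 / x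
      = (3 * x ^ 2 + s2 * c * x + 2 * c ^ 2) / (s2 * s3 * x) := by
    field_simp
    linear_combination x^2 * h3 + c^2 * h2
  rw [hR]
  have hr : (0:ℝ) ≤ (3 * x ^ 2 + s2 * c * x + 2 * c ^ 2) / (s2 * s3 * x) := by positivity
  calc Real.sqrt ((3/2)*x^2 + s2 * c * x + c^2)
      ≤ Real.sqrt (((3 * x ^ 2 + s2 * c * x + 2 * c ^ 2) / (s2 * s3 * x)) ^ 2) := by
        apply Real.sqrt_le_sqrt
        rw [div_pow, le_div_iff₀ (by positivity)]
        have : (s2 * s3 * x) ^ 2 = 6 * x ^ 2 := by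
          rw [mul_pow, mul_pow, h2, h3]; ring
        rw [this]
        nlinarith [sq_nonneg c, sq_nonneg (c*x), mul_pos (mul_pos p2 hc) (mul_pos hc (mul_pos hc hx))]
      _ = _ := Real.sqrt_sq hr
end

section
/- For c > 0 and the corresponding x₀ ∈ (0, √2/3) with c = −x₀/(√2 log(3x₀/√2)), define D(x₀) = 3x₀²·(−√2 − √2/log(3x₀/√2) + α√3). Then D(x₀) < 0 whenever α < √(2/3)·(1 + 1/log(3x₀/√2)); moreover (1 + 1/log(3x₀/√2)) → 1 from below as x₀ → 0⁺, so for every α < √(2/3) there exists x₀ ∈ (0, √2/3) with D(x₀) < 0. -/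
open Real Set Filter

lemma aux_key (α x₀ : ℝ) (hx : x₀ ∈ Ioo 0 (Real.sqrt 2 / 3))
    (hα : α < Real.sqrt (2/3) * (1 + 1 / Real.log (3 * x₀ / Real.sqrt 2))) :
    3 * x₀^2 * (-Real.sqrt 2 - Real.sqrt 2 / Real.log (3 * x₀ / Real.sqrt 2)
      + α * Real.sqrt 3) < 0 := by
  have h32 : Real.sqrt 3 * Real.sqrt (2/3) = Real.sqrt 2 := by
    rw [← Real.sqrt_mul (by norm_num)]; norm_num
  set L := Real.log (3 * x₀ / Real.sqrt 2)
  have h3 : (0:ℝ) < Real.sqrt 3 := Real.sqrt_pos.mpr (by norm_num)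
  have hneg : -Real.sqrt 2 - Real.sqrt 2 / L + α * Real.sqrt 3 < 0 := by
    have : -Real.sqrt 2 - Real.sqrt 2 / L + α * Real.sqrt 3
        = Real.sqrt 3 * (α - Real.sqrt (2/3) * (1 + 1 / L)) := by
      ring_nf
      rw [mul_comm (Real.sqrt 3), mul_assoc, mul_comm (Real.sqrt (2/3)), h32]
      ring
    rw [this]
    exact mul_neg_of_pos_of_neg h3 (by linarith)
  have hx0 : (0:ℝ) < x₀ := hx.1
  exact mul_neg_of_pos_of_neg (by positivity) hneg

lemma aux_Lneg (x₀ : ℝ) (hx : x₀ ∈ Ioo 0 (Real.sqrt 2 / 3)) :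
    Real.log (3 * x₀ / Real.sqrt 2) < 0 := by
  have h2 : (0:ℝ) < Real.sqrt 2 := Real.sqrt_pos.mpr (by norm_num)
  have hx0 : (0:ℝ) < x₀ := hx.1
  apply Real.log_neg
  · positivity
  · rw [div_lt_one h2]
    have := hx.2
    nlinarith [h2]

lemma aux_tendsto : Tendsto (fun x₀ : ℝ => 1 + 1 / Real.log (3 * x₀ / Real.sqrt 2))
    (nhdsWithin 0 (Ioi 0)) (nhds 1) := by
  have h2 : (0:ℝ) < Real.sqrt 2 := Real.sqrt_pos.mpr (by norm_num)
  have hmap : Tendsto (fun x₀ : ℝ => 3 * x₀ / Real.sqrt 2)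
      (nhdsWithin 0 (Ioi 0)) (nhdsWithin 0 (Ioi 0)) := by
    apply tendsto_nhdsWithin_of_tendsto_nhds_of_eventually_within
    · have : Tendsto (fun x₀ : ℝ => 3 * x₀ / Real.sqrt 2) (nhds 0) (nhds (3 * 0 / Real.sqrt 2)) :=
        (tendsto_id.const_mul 3).div_const _
      simpa using this.mono_left nhdsWithin_le_nhds
    · filter_upwards [self_mem_nhdsWithin] with x hx
      exact div_pos (by linarith [mem_Ioi.mp hx]) h2
  have hlog : Tendsto (fun x₀ : ℝ => Real.log (3 * x₀ / Real.sqrt 2))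
      (nhdsWithin 0 (Ioi 0)) atBot :=
    Real.tendsto_log_nhdsGT_zero.comp hmap
  have hinv : Tendsto (fun x₀ : ℝ => 1 / Real.log (3 * x₀ / Real.sqrt 2))
      (nhdsWithin 0 (Ioi 0)) (nhds 0) := by
    have hneg : Tendsto (fun x₀ : ℝ => -Real.log (3 * x₀ / Real.sqrt 2))
        (nhdsWithin 0 (Ioi 0)) atTop := tendsto_neg_atBot_atTop.comp hlog
    have := hneg.inv_tendsto_atTop
    have h2 := this.neg
    simp only [Pi.inv_apply, ← inv_neg, neg_neg, neg_zero] at h2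
    simpa [one_div] using h2
  have := (tendsto_const_nhds : Tendsto (fun _ : ℝ => (1:ℝ)) (nhdsWithin 0 (Ioi 0)) (nhds 1)).add hinv
  simpa using this

lemma aux_ev_mem : ∀ᶠ x₀ in nhdsWithin (0:ℝ) (Ioi 0), x₀ ∈ Ioo 0 (Real.sqrt 2 / 3) := by
  have h2 : (0:ℝ) < Real.sqrt 2 / 3 := by positivity
  filter_upwards [Ioo_mem_nhdsGT_of_mem (by exact ⟨le_refl 0, h2⟩ : (0:ℝ) ∈ Ico 0 (Real.sqrt 2 / 3))] with x hx
  exact hx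

lemma aux_ev_lt : ∀ᶠ x₀ in nhdsWithin (0:ℝ) (Ioi 0),
    1 + 1 / Real.log (3 * x₀ / Real.sqrt 2) < 1 := by
  filter_upwards [aux_ev_mem] with x hx
  have := aux_Lneg x hx
  have : 1 / Real.log (3 * x / Real.sqrt 2) < 0 := div_neg_of_pos_of_neg one_pos this
  linarith

theorem stmt_11 (α : ℝ) :
    (∀ x₀ ∈ Ioo 0 (Real.sqrt 2 / 3),
      α < Real.sqrt (2/3) * (1 + 1 / Real.log (3 * x₀ / Real.sqrt 2)) →
      3 * x₀^2 * (-Real.sqrt 2 - Real.sqrt 2 / Real.log (3 * x₀ / Real.sqrt 2)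
        + α * Real.sqrt 3) < 0) ∧
    Tendsto (fun x₀ : ℝ => 1 + 1 / Real.log (3 * x₀ / Real.sqrt 2))
      (nhdsWithin 0 (Ioi 0)) (nhds 1) ∧
    (∀ᶠ x₀ in nhdsWithin (0:ℝ) (Ioi 0),
      1 + 1 / Real.log (3 * x₀ / Real.sqrt 2) < 1) ∧
    (α < Real.sqrt (2/3) →
      ∃ x₀ ∈ Ioo 0 (Real.sqrt 2 / 3),
        3 * x₀^2 * (-Real.sqrt 2 - Real.sqrt 2 / Real.log (3 * x₀ / Real.sqrt 2)
          + α * Real.sqrt 3) < 0) := by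
  refine ⟨fun x₀ hx hα => aux_key α x₀ hx hα, aux_tendsto, aux_ev_lt, fun hα => ?_⟩
  have hs : (0:ℝ) < Real.sqrt (2/3) := Real.sqrt_pos.mpr (by norm_num)
  have hev : ∀ᶠ x₀ in nhdsWithin (0:ℝ) (Ioi 0),
      α < Real.sqrt (2/3) * (1 + 1 / Real.log (3 * x₀ / Real.sqrt 2)) := by
    have := aux_tendsto.const_mul (Real.sqrt (2/3))
    rw [mul_one] at this
    exact this.eventually_const_lt hα
  obtain ⟨x₀, hx, h⟩ := (hev.and aux_ev_mem).exists
  exact ⟨x₀, h, aux_key α x₀ h hx⟩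
end
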